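/- Let H be a (complex) Hilbert space, x a self-adjoint bounded operator on H, p and q orthogonal projections with p + q = 1, and ξ ∈ H a unit vector. Assume p x p = 0 and ⟨q ξ, ξ⟩ ≤ δ for some 0 ≤ δ < 1/2. Then |⟨x ξ, ξ⟩| ≤ 2·√(δ − δ²)·‖x‖. -/

import Mathlib

set_option maxHeartbeats 1000000 in
/-- Real-arithmetic core of the estimate. -/
private lemma key_real (N α β A C δ : ℝ) (hN : 0 ≤ N) (hα : 0 ≤ α) (hβ : 0 ≤ β)
    (hsum : α^2 + β^2 = 1) (hβδ : β^2 ≤ δ) (hδ0 : 0 ≤ δ) (hδ : δ < 1/2)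
    (hstar : ∀ s u : ℝ, |2*s*u*A + u^2*C| ≤ N*(s^2*α^2 + u^2*β^2)) :
    |2*A + C| ≤ 2*Real.sqrt (δ - δ^2)*N := by
  have hβα : β ≤ α := by nlinarith
  have hC : |C| ≤ N*β^2 := by
    have h := abs_le.mp (hstar 0 1)
    rw [abs_le]; constructor <;> nlinarith [h.1, h.2]
  have hAC : ∀ s : ℝ, 2*s*|A| + |C| ≤ N*(s^2*α^2 + β^2) := by
    intro s
    have h1 := abs_le.mp (hstar s 1)
    have h2 := abs_le.mp (hstar (-s) 1)
    rcases abs_cases A with ⟨eA, _⟩ | ⟨eA, _⟩ <;>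
      rcases abs_cases C with ⟨eC, _⟩ | ⟨eC, _⟩ <;>
      rw [eA, eC] <;> nlinarith [h1.1, h1.2, h2.1, h2.2]
  have habs : |2*A + C| ≤ 2*|A| + |C| := by
    calc |2*A + C| ≤ |2*A| + |C| := abs_add_le _ _
    _ = 2*|A| + |C| := by rw [abs_mul]; norm_num
  have hQ : 0 ≤ N*β^2 - |C| := by linarith
  have hmain : 2*|A| + |C| ≤ 2*N*(α*β) := by
    rcases eq_or_lt_of_le hN with hN0 | hN0
    · have h := hAC 1
      nlinarith [abs_nonneg A, abs_nonneg C, mul_nonneg hα hβ]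
    · have hα0 : 0 < α := by nlinarith
      have hP : 0 < N*α^2 := by positivity
      have hA2 : |A|^2 ≤ (N*α^2) * (N*β^2 - |C|) := by
        have h := hAC (|A|/(N*α^2))
        have hPne : N*α^2 ≠ 0 := ne_of_gt hP
        have e : N*((|A|/(N*α^2))^2*α^2 + β^2) = |A|^2/(N*α^2) + N*β^2 := by
          field_simp
        rw [e] at h
        have e2 : 2*(|A|/(N*α^2))*|A| = 2*(|A|^2/(N*α^2)) := by ring
        rw [e2] at h
        have h3 : |A|^2/(N*α^2) ≤ N*β^2 - |C| := by linarith
        calc |A|^2 = (|A|^2/(N*α^2))*(N*α^2) := by field_simp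
          _ ≤ (N*β^2 - |C|)*(N*α^2) := mul_le_mul_of_nonneg_right h3 hP.le
          _ = (N*α^2)*(N*β^2 - |C|) := by ring
      rcases eq_or_lt_of_le hβ with hβ0 | hβ0
      · have hb2 : β^2 = 0 := by rw [← hβ0]; ring
        have hb3 : N*β^2 = 0 := by rw [hb2, mul_zero]
        have hCz : |C| = 0 := le_antisymm (by linarith [hC]) (abs_nonneg C)
        have hAz : |A| = 0 := by
          have e : N*α^2*(N*β^2 - |C|) = 0 := by rw [hb3, hCz]; ring
          have h4 : |A|^2 = 0 := le_antisymm (e ▸ hA2) (sq_nonneg _)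
          exact sq_eq_zero_iff.mp h4
        rw [hAz, hCz]
        have h5 : (0:ℝ) ≤ 2*N*(α*β) := by positivity
        simpa using h5
      · have hX : 0 ≤ 2*(α*β*|A|) := by positivity
        have hY : 0 ≤ β^2*(N*α^2) + α^2*(N*β^2 - |C|) :=
          add_nonneg (by positivity) (mul_nonneg (sq_nonneg α) hQ)
        have hA2' := mul_le_mul_of_nonneg_left hA2 (show (0:ℝ) ≤ α^2*β^2 by positivity)
        have hXY : (2*(α*β*|A|))^2 ≤ (β^2*(N*α^2) + α^2*(N*β^2 - |C|))^2 := by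
          nlinarith [hA2', sq_nonneg (β^2*(N*α^2) - α^2*(N*β^2 - |C|))]
        have h2AB : 2*(α*β*|A|) ≤ β^2*(N*α^2) + α^2*(N*β^2 - |C|) := by
          have h5 := Real.sqrt_le_sqrt hXY
          rwa [Real.sqrt_sq hX, Real.sqrt_sq hY] at h5
        have h6 : α*(β*|C|) ≤ α*(α*|C|) :=
          mul_le_mul_of_nonneg_left (mul_le_mul_of_nonneg_right hβα (abs_nonneg C)) hα
        have hab : 0 < α*β := mul_pos hα0 hβ0
        refine le_of_mul_le_mul_right ?_ hab
        nlinarith [h2AB, h6]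
  have hsqrt : α*β ≤ Real.sqrt (δ - δ^2) := by
    apply (Real.le_sqrt (mul_nonneg hα hβ) (by nlinarith)).mpr
    nlinarith
  calc |2*A + C| ≤ 2*N*(α*β) := le_trans habs hmain
    _ ≤ 2*N*Real.sqrt (δ - δ^2) := by
        exact mul_le_mul_of_nonneg_left hsqrt (by positivity)
    _ = 2*Real.sqrt (δ - δ^2)*N := by ring

/-- If `x` is a self-adjoint bounded operator, `p + q = 1` are orthogonal
projections with `p x p = 0`, and `ξ` is a unit vector with `⟨q ξ, ξ⟩ ≤ δ < 1/2`,
then `|⟨x ξ, ξ⟩| ≤ 2 √(δ - δ²) ‖x‖`. -/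
theorem stmt12 {H : Type*} [NormedAddCommGroup H] [InnerProductSpace ℂ H]
    [CompleteSpace H]
    (x p q : H →L[ℂ] H) (hx : IsSelfAdjoint x)
    (hp : IsSelfAdjoint p) (hp2 : p ∘L p = p)
    (hq : IsSelfAdjoint q) (hq2 : q ∘L q = q)
    (hpq : p + q = 1)
    (ξ : H) (hξ : ‖ξ‖ = 1)
    (hpxp : p ∘L x ∘L p = 0)
    (δ : ℝ) (hδ0 : 0 ≤ δ) (hδ : δ < 1 / 2)
    (hqξ : (inner ℂ (q ξ) ξ : ℂ).re ≤ δ) :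
    ‖(inner ℂ (x ξ) ξ : ℂ)‖ ≤ 2 * Real.sqrt (δ - δ ^ 2) * ‖x‖ := by
  set ξ1 := p ξ with hξ1
  set ξ2 := q ξ with hξ2
  have hsymx : ∀ v w : H, (inner ℂ (x v) w : ℂ) = inner ℂ v (x w) := hx.isSymmetric
  have hsymp : ∀ v w : H, (inner ℂ (p v) w : ℂ) = inner ℂ v (p w) := hp.isSymmetric
  have hsymq : ∀ v w : H, (inner ℂ (q v) w : ℂ) = inner ℂ v (q w) := hq.isSymmetric
  have hsplit : ξ1 + ξ2 = ξ := by
    have := congrArg (fun f : H →L[ℂ] H => f ξ) hpq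
    simpa using this
  have hqv : ∀ v : H, p (q v) = 0 := by
    intro v
    have h1 : p v + q v = v := by
      have := congrArg (fun f : H →L[ℂ] H => f v) hpq
      simpa using this
    have h2 : q v = v - p v := eq_sub_of_add_eq' h1
    have h3 : p (p v) = p v := by
      have := congrArg (fun f : H →L[ℂ] H => f v) hp2
      simpa using this
    rw [h2, map_sub, h3, sub_self]
  have horth : (inner ℂ ξ1 ξ2 : ℂ) = 0 := by
    rw [hξ1, hξ2, hsymp, hqv, inner_zero_right]
  have hpyth : ‖ξ1‖^2 + ‖ξ2‖^2 = 1 := by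
    have := @norm_add_sq ℂ H _ _ _ ξ1 ξ2
    rw [horth, hsplit, hξ] at this
    simpa using this.symm
  have hqq : q ξ2 = ξ2 := by
    have := congrArg (fun f : H →L[ℂ] H => f ξ) hq2
    simpa using this
  have ht : ‖ξ2‖^2 ≤ δ := by
    have h1 : (inner ℂ ξ2 ξ : ℂ) = inner ℂ ξ2 ξ2 := by
      conv_lhs => rw [← hqq, hsymq, ← hξ2]
    have h2 : (inner ℂ ξ2 ξ : ℂ).re = ‖ξ2‖^2 := by
      rw [h1, ← RCLike.re_to_complex, inner_self_eq_norm_sq]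
    rw [← h2]; exact hqξ
  have hxξ1 : (inner ℂ (x ξ1) ξ1 : ℂ) = 0 := by
    rw [hξ1, ← hsymp (x (p ξ)) ξ]
    have h : p (x (p ξ)) = (p ∘L x ∘L p) ξ := rfl
    rw [h, hpxp]
    simp
  have hconj : (inner ℂ (x ξ2) ξ1 : ℂ) = starRingEnd ℂ (inner ℂ (x ξ1) ξ2) := by
    rw [hsymx, inner_conj_symm]
  set A := (inner ℂ (x ξ1) ξ2 : ℂ).re with hA
  set C := (inner ℂ (x ξ2) ξ2 : ℂ).re with hCdef
  have hexp : ∀ s u : ℝ, (inner ℂ (x ((s:ℂ)•ξ1 + (u:ℂ)•ξ2)) ((s:ℂ)•ξ1 + (u:ℂ)•ξ2) : ℂ).re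
      = 2*s*u*A + u^2*C := by
    intro s u
    rw [map_add, map_smul, map_smul]
    simp only [inner_add_left, inner_add_right, inner_smul_left, inner_smul_right,
      Complex.conj_ofReal]
    rw [hxξ1, hconj]
    simp only [Complex.add_re, Complex.re_ofReal_mul, Complex.conj_re, Complex.mul_re,
      Complex.zero_re, Complex.zero_im, mul_zero, Complex.ofReal_re, Complex.ofReal_im,
      zero_mul, sub_zero, add_zero, zero_sub]
    ring
  have hwnorm : ∀ s u : ℝ, ‖(s:ℂ)•ξ1 + (u:ℂ)•ξ2‖^2 = s^2*‖ξ1‖^2 + u^2*‖ξ2‖^2 := by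
    intro s u
    have h0 : (inner ℂ ((s:ℂ)•ξ1) ((u:ℂ)•ξ2) : ℂ) = 0 := by
      rw [inner_smul_left, inner_smul_right, horth]; simp
    have := @norm_add_sq ℂ H _ _ _ ((s:ℂ)•ξ1) ((u:ℂ)•ξ2)
    rw [h0] at this
    simp only [map_zero, mul_zero, add_zero, RCLike.zero_re] at this
    rw [this, norm_smul, norm_smul, mul_pow, mul_pow]
    norm_num [sq_abs]
  have hstar : ∀ s u : ℝ, |2*s*u*A + u^2*C| ≤ ‖x‖*(s^2*‖ξ1‖^2 + u^2*‖ξ2‖^2) := by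
    intro s u
    set w := (s:ℂ)•ξ1 + (u:ℂ)•ξ2 with hw
    rw [← hexp s u, ← hwnorm s u]
    calc |(inner ℂ (x w) w : ℂ).re| ≤ ‖(inner ℂ (x w) w : ℂ)‖ := Complex.abs_re_le_norm _
      _ ≤ ‖x w‖ * ‖w‖ := norm_inner_le_norm _ _
      _ ≤ (‖x‖ * ‖w‖) * ‖w‖ := mul_le_mul_of_nonneg_right (x.le_opNorm w) (norm_nonneg w)
      _ = ‖x‖ * ‖w‖^2 := by ring
  have hreal : (inner ℂ (x ξ) ξ : ℂ).re = 2*A + C := by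
    have h := hexp 1 1
    rw [show ((1:ℝ):ℂ) = 1 by norm_num, one_smul, one_smul, hsplit] at h
    rw [h]; ring
  have him : (inner ℂ (x ξ) ξ : ℂ).im = 0 := by
    have h : starRingEnd ℂ (inner ℂ (x ξ) ξ : ℂ) = inner ℂ (x ξ) ξ := by
      rw [inner_conj_symm, hsymx]
    exact Complex.conj_eq_iff_im.mp h
  have hnorm : ‖(inner ℂ (x ξ) ξ : ℂ)‖ = |2*A + C| := by
    have h : (inner ℂ (x ξ) ξ : ℂ) = ((2*A + C : ℝ) : ℂ) := by
      apply Complex.ext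
      · rw [hreal]; norm_num
      · rw [him]; norm_num
    rw [h, Complex.norm_real, Real.norm_eq_abs]
  rw [hnorm]
  exact key_real ‖x‖ ‖ξ1‖ ‖ξ2‖ A C δ (norm_nonneg x) (norm_nonneg ξ1) (norm_nonneg ξ2)
    hpyth ht hδ0 (by linarith) hstar
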